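/- Let k be a field of characteristic different from 2, let G be a group, and let ρ : G → GL₂(k) be a group homomorphism such that there exists c ∈ G with ρ(c)² = 1 and det ρ(c) = −1. If the associated 2-dimensional representation of G on k² is irreducible (has no nonzero proper G-stable subspace), then for every field extension K of k the representation of G on K² obtained by extension of scalars is also irreducible. -/
import Mathlib

theorem odd_irreducible_implies_absolutely_irreducible
    (k : Type*) [Field k] (hchar : ringChar k ≠ 2)
    (G : Type*) [Group G] (ρ : G →* GL (Fin 2) k)
    (hodd : ∃ c : G, (ρ c) ^ 2 = 1 ∧ ((ρ c : Matrix (Fin 2) (Fin 2) k)).det = -1)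
    (hirr : ∀ p : Submodule k (Fin 2 → k),
        (∀ (g : G) (x : Fin 2 → k), x ∈ p →
          ((ρ g : Matrix (Fin 2) (Fin 2) k)).mulVec x ∈ p) → p = ⊥ ∨ p = ⊤)
    (K : Type*) [Field K] [Algebra k K] :
    ∀ q : Submodule K (Fin 2 → K),
      (∀ (g : G) (x : Fin 2 → K), x ∈ q →
        (((ρ g : Matrix (Fin 2) (Fin 2) k)).map (algebraMap k K)).mulVec x ∈ q) →
      q = ⊥ ∨ q = ⊤ := by
  intro q hq
  by_contra hcon
  push_neg at hcon
  obtain ⟨hqbot, hqtop⟩ := hcon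
  set f : k →+* K := algebraMap k K with hf
  have hfinj : Function.Injective f := f.injective
  have h2k : (2 : k) ≠ 0 := Ring.two_ne_zero hchar
  have hne : (1 : k) ≠ -1 := by
    intro h
    apply h2k
    linear_combination h
  have h2K : (2 : K) ≠ 0 := by
    intro h
    apply h2k
    apply hfinj
    simp only [map_ofNat, map_zero]
    exact h
  obtain ⟨c, hc2, hcdet⟩ := hodd
  set A : Matrix (Fin 2) (Fin 2) k := (ρ c : Matrix (Fin 2) (Fin 2) k) with hA
  have hA2 : A * A = 1 := by
    have := congrArg (Units.val) hc2
    simpa [pow_two] using this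
  set M : Matrix (Fin 2) (Fin 2) K := A.map f with hM
  have hmapmul : ∀ B C : Matrix (Fin 2) (Fin 2) k, (B * C).map f = B.map f * C.map f := by
    intro B C
    exact Matrix.map_mul
  have hM2 : M * M = 1 := by
    rw [hM, ← hmapmul, hA2]
    simp [Matrix.map_one]
  have hmapvec : ∀ (B : Matrix (Fin 2) (Fin 2) k) (x : Fin 2 → k),
      (B.map f).mulVec (f ∘ x) = f ∘ (B.mulVec x) := by
    intro B x
    funext i
    exact (RingHom.map_mulVec f B x i).symm
  -- get a nonzero element of q
  obtain ⟨v, hvq, hv0⟩ := Submodule.exists_mem_ne_zero_of_ne_bot hqbot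
  have hMvq : M.mulVec v ∈ q := hq c v hvq
  -- find eigenvector u ∈ q with eigenvalue ε ∈ {1, -1}
  obtain ⟨ε, hε, u, huq, hu0, huev⟩ :
      ∃ ε : k, (ε = 1 ∨ ε = -1) ∧ ∃ u, u ∈ q ∧ u ≠ 0 ∧ M.mulVec u = f ε • u := by
    by_cases h : M.mulVec v + v = 0
    · refine ⟨-1, Or.inr rfl, v - M.mulVec v, Submodule.sub_mem q hvq hMvq, ?_, ?_⟩
      · have : v - M.mulVec v = (2 : K) • v := by
          rw [eq_comm, two_smul]
          rw [add_eq_zero_iff_eq_neg] at h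
          rw [h]
          abel
        rw [this]
        exact smul_ne_zero h2K hv0
      · rw [Matrix.mulVec_sub, Matrix.mulVec_mulVec, hM2, Matrix.one_mulVec]
        simp only [map_neg, map_one]
        rw [neg_smul, one_smul, neg_sub]
    · refine ⟨1, Or.inl rfl, M.mulVec v + v, Submodule.add_mem q hMvq hvq, h, ?_⟩
      rw [Matrix.mulVec_add, Matrix.mulVec_mulVec, hM2, Matrix.one_mulVec]
      simp only [map_one, one_smul]
      abel
  have hε2 : ε * ε = 1 := by rcases hε with h | h <;> rw [h] <;> ring
  -- A ≠ ± ε • 1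
  have hdet1 : ∀ δ : k, A ≠ δ • (1 : Matrix (Fin 2) (Fin 2) k) ∨ True := fun _ => Or.inr trivial
  have hAne : ∀ δ : k, δ * δ = 1 → A ≠ δ • (1 : Matrix (Fin 2) (Fin 2) k) := by
    intro δ hδ h
    rw [h] at hcdet
    rw [Matrix.det_smul, Matrix.det_one] at hcdet
    simp only [Fintype.card_fin, mul_one] at hcdet
    rw [pow_two, hδ] at hcdet
    exact hne hcdet
  -- eigenvector over k
  have hprod : (A - ε • 1) * (A + ε • 1) = 0 := by
    have : (A - ε • 1) * (A + ε • 1) = A * A - (ε * ε) • 1 := by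
      simp only [sub_mul, mul_add, Matrix.smul_mul, Matrix.mul_smul, smul_smul, one_mul,
        mul_one]
      abel
    rw [this, hA2, hε2, one_smul, sub_self]
  have hBne : A - ε • 1 ≠ 0 := by
    intro h
    exact hAne ε hε2 (by rw [sub_eq_zero] at h; exact h)
  have hCne : A + ε • 1 ≠ 0 := by
    intro h
    refine hAne (-ε) (by rw [neg_mul_neg]; exact hε2) ?_
    rw [eq_comm, neg_smul, neg_eq_iff_add_eq_zero, add_comm]
    exact h
  -- get nonzero column w of A + ε•1
  obtain ⟨i0, j0, hij⟩ : ∃ i j, (A + ε • (1:Matrix (Fin 2) (Fin 2) k)) i j ≠ 0 := by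
    by_contra h
    push_neg at h
    exact hCne (Matrix.ext fun i j => h i j)
  set w : Fin 2 → k := fun i => (A + ε • 1) i j0 with hw
  have hw0 : w ≠ 0 := by
    intro h
    apply hij
    have := congrFun h i0
    simpa [hw] using this
  have hwev : (A - ε • 1).mulVec w = 0 := by
    funext i
    have h0 := congrFun (congrFun hprod i) j0
    rw [Matrix.mul_apply] at h0
    simpa [Matrix.mulVec, dotProduct, hw] using h0
  -- over K
  set N : Matrix (Fin 2) (Fin 2) K := (A - ε • 1).map f with hN
  have hNne : N ≠ 0 := by
    intro h
    apply hBne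
    ext i j
    have h1 : N i j = 0 := by rw [h]; rfl
    rw [hN, Matrix.map_apply] at h1
    simpa using hfinj (by rw [map_zero]; exact h1)
  set wK : Fin 2 → K := f ∘ w with hwK
  have hwK0 : wK ≠ 0 := by
    intro h
    apply hw0
    funext i
    have h1 : f (w i) = 0 := congrFun h i
    rw [← map_zero f] at h1
    exact hfinj h1
  have hwKker : N.mulVec wK = 0 := by
    rw [hN, hwK, hmapvec, hwev]
    funext i
    simp
  have hNsplit : N = M - f ε • 1 := by
    rw [hN, hM]
    ext i j
    simp [Matrix.map_apply, Matrix.sub_apply, Matrix.smul_apply, Matrix.one_apply, apply_ite f]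
  have huker : N.mulVec u = 0 := by
    rw [hNsplit, Matrix.sub_mulVec, Matrix.smul_mulVec, Matrix.one_mulVec, huev, sub_self]
  -- kernel has dimension ≤ 1
  set L : (Fin 2 → K) →ₗ[K] (Fin 2 → K) := Matrix.mulVecLin N with hL
  have huL : u ∈ LinearMap.ker L := by simpa [hL, Matrix.mulVecLin_apply] using huker
  have hwL : wK ∈ LinearMap.ker L := by simpa [hL, Matrix.mulVecLin_apply] using hwKker
  have hrange : LinearMap.range L ≠ ⊥ := by
    intro h
    have hL0 : L = 0 := LinearMap.range_eq_bot.mp h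
    apply hNne
    ext i j
    have h1 : N.mulVec (Pi.single j 1) = 0 := by
      have h2 : L (Pi.single j 1) = 0 := by rw [hL0]; rfl
      simpa [hL, Matrix.mulVecLin_apply] using h2
    have h3 := congrFun h1 i
    simpa [Matrix.mulVec_single] using h3
  have hkerle : Module.finrank K (LinearMap.ker L) ≤ 1 := by
    have hrn := LinearMap.finrank_range_add_finrank_ker L
    rw [Module.finrank_fin_fun] at hrn
    have hrpos : 0 < Module.finrank K (LinearMap.range L) := by
      rw [Module.finrank_pos_iff]
      exact Submodule.nontrivial_iff_ne_bot.mpr hrange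
    omega
  have hspan : Submodule.span K {u} = LinearMap.ker L := by
    apply Submodule.eq_of_le_of_finrank_le
    · rw [Submodule.span_singleton_le_iff_mem]; exact huL
    · rw [finrank_span_singleton hu0]; exact hkerle
  have hwKq : wK ∈ q := by
    have : wK ∈ Submodule.span K {u} := by rw [hspan]; exact hwL
    obtain ⟨a, ha⟩ := Submodule.mem_span_singleton.mp this
    rw [← ha]
    exact Submodule.smul_mem q a huq
  -- build p over k
  set fmap : (Fin 2 → k) →ₗ[k] (Fin 2 → K) :=
    (Algebra.linearMap k K).compLeft (Fin 2) with hfmap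
  have hfmap_apply : ∀ x : Fin 2 → k, fmap x = f ∘ x := fun x => rfl
  set p : Submodule k (Fin 2 → k) := (q.restrictScalars k).comap fmap with hp
  have hpstab : ∀ (g : G) (x : Fin 2 → k), x ∈ p →
      ((ρ g : Matrix (Fin 2) (Fin 2) k)).mulVec x ∈ p := by
    intro g x hx
    have hx' : f ∘ x ∈ q := hx
    have := hq g (f ∘ x) hx'
    rw [hmapvec] at this
    show fmap _ ∈ q
    rw [hfmap_apply]
    exact this
  rcases hirr p hpstab with h | h
  · -- w ∈ p, w ≠ 0
    have : w ∈ p := by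
      show fmap w ∈ q
      rw [hfmap_apply]
      exact hwKq
    rw [h] at this
    exact hw0 (Submodule.mem_bot k |>.mp this)
  · -- p = ⊤ forces q = ⊤
    apply hqtop
    have hsingle : ∀ i : Fin 2, Pi.single i (1:K) ∈ q := by
      intro i
      have hmem : Pi.single i (1:k) ∈ p := by rw [h]; trivial
      have : f ∘ Pi.single i (1:k) ∈ q := hmem
      have heq : f ∘ Pi.single i (1:k) = Pi.single i (1:K) := by
        funext j
        by_cases hji : j = i <;> simp [Pi.single_apply, hji]
      rwa [heq] at this
    rw [Submodule.eq_top_iff']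
    intro x
    have hxrep : x = ∑ i : Fin 2, x i • (Pi.single i (1:K) : Fin 2 → K) := by
      funext j
      simp [Pi.single_apply, Finset.sum_apply]
    rw [hxrep]
    exact Submodule.sum_mem q fun i _ => Submodule.smul_mem q _ (hsingle i)
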